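/- Let q ∈ [0,1), ν ∈ [0,1), α > 0 and x ∈ [0,1]. If B and B' are independent Bernoulli random variables with success probabilities α(1−x)/(1+α) and (α+νx)/(1+α) respectively, then E|B' − B| ≤ 1 − (1−ν)/(1+α)². -/

import Mathlib

open MeasureTheory ProbabilityTheory

lemma aux_eq_indicator {Ω : Type*} (B : Ω → ℝ) (h01 : ∀ ω, B ω = 0 ∨ B ω = 1) :
    B = Set.indicator {ω | B ω = 1} (fun _ => (1:ℝ)) := by
  funext ω
  rcases h01 ω with h | h <;> simp [Set.indicator, h]

lemma aux_integral {Ω : Type*} [MeasurableSpace Ω] (μ : Measure Ω) [IsProbabilityMeasure μ]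
    (B : Ω → ℝ) (hB : Measurable B) (h01 : ∀ ω, B ω = 0 ∨ B ω = 1) :
    ∫ ω, B ω ∂μ = (μ {ω | B ω = 1}).toReal := by
  have hset : MeasurableSet {ω | B ω = 1} := hB (measurableSet_singleton 1)
  conv_lhs => rw [show (fun ω => B ω) = B from rfl, aux_eq_indicator B h01]
  rw [integral_indicator hset]
  simp
  rfl

lemma aux_integrable {Ω : Type*} [MeasurableSpace Ω] (μ : Measure Ω) [IsProbabilityMeasure μ]
    (B : Ω → ℝ) (hB : Measurable B) (h01 : ∀ ω, B ω = 0 ∨ B ω = 1) :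
    Integrable B μ := by
  have hset : MeasurableSet {ω | B ω = 1} := hB (measurableSet_singleton 1)
  rw [aux_eq_indicator B h01]
  exact (integrable_const (1:ℝ)).indicator hset

theorem kpz_bernoulli_diff_moment
    {Ω : Type*} [MeasurableSpace Ω] (μ : Measure Ω) [IsProbabilityMeasure μ]
    (q ν α x : ℝ)
    (hq0 : 0 ≤ q) (hq1 : q < 1) (hν0 : 0 ≤ ν) (hν1 : ν < 1) (hα : 0 < α)
    (hx : x ∈ Set.Icc (0 : ℝ) 1)
    (B B' : Ω → ℝ) (hB : Measurable B) (hB' : Measurable B')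
    (hB01 : ∀ ω, B ω = 0 ∨ B ω = 1) (hB'01 : ∀ ω, B' ω = 0 ∨ B' ω = 1)
    (hBp : μ {ω | B ω = 1} = ENNReal.ofReal (α * (1 - x) / (1 + α)))
    (hB'p : μ {ω | B' ω = 1} = ENNReal.ofReal ((α + ν * x) / (1 + α)))
    (hindep : IndepFun B B' μ) :
    ∫ ω, |B' ω - B ω| ∂μ ≤ 1 - (1 - ν) / (1 + α) ^ 2 := by
  obtain ⟨hx0, hx1⟩ := hx
  have hα1 : (0:ℝ) < 1 + α := by linarith
  set p : ℝ := α * (1 - x) / (1 + α) with hp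
  set p' : ℝ := (α + ν * x) / (1 + α) with hp'
  have hp0 : 0 ≤ p := div_nonneg (by nlinarith) hα1.le
  have hp'0 : 0 ≤ p' := div_nonneg (by nlinarith) hα1.le
  -- pointwise identity
  have habs : ∀ ω, |B' ω - B ω| = B ω + B' ω - 2 * (B ω * B' ω) := by
    intro ω
    rcases hB01 ω with h1 | h1 <;> rcases hB'01 ω with h2 | h2 <;>
      simp [h1, h2] <;> norm_num
  have hBi : Integrable B μ := aux_integrable μ B hB hB01
  have hB'i : Integrable B' μ := aux_integrable μ B' hB' hB'01
  have hmuli : Integrable (fun ω => B ω * B' ω) μ := by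
    have : Integrable (B * B') μ := by
      apply aux_integrable μ _ (hB.mul hB')
      intro ω
      rcases hB01 ω with h1 | h1 <;> rcases hB'01 ω with h2 | h2 <;> simp [h1, h2]
    exact this
  have hIB : ∫ ω, B ω ∂μ = p := by
    rw [aux_integral μ B hB hB01, hBp, ENNReal.toReal_ofReal hp0]
  have hIB' : ∫ ω, B' ω ∂μ = p' := by
    rw [aux_integral μ B' hB' hB'01, hB'p, ENNReal.toReal_ofReal hp'0]
  have hImul : ∫ ω, B ω * B' ω ∂μ = p * p' := by
    have := hindep.integral_mul_eq_mul_integral hBi.aestronglyMeasurable hB'i.aestronglyMeasurable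
    rw [show (B * B') = fun ω => B ω * B' ω from rfl] at this
    rw [this, hIB, hIB']
  have key : ∫ ω, |B' ω - B ω| ∂μ = p + p' - 2 * (p * p') := by
    calc ∫ ω, |B' ω - B ω| ∂μ = ∫ ω, (B ω + B' ω - 2 * (B ω * B' ω)) ∂μ := by
          exact integral_congr_ae (Filter.Eventually.of_forall habs)
      _ = p + p' - 2 * (p * p') := by
          have hsum : Integrable (fun ω => B ω + B' ω) μ := hBi.add hB'i
          rw [integral_sub hsum (hmuli.const_mul 2),
            integral_add hBi hB'i, MeasureTheory.integral_const_mul, hIB, hIB', hImul]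
  rw [key, hp, hp']
  have h2 : α * (1 - x) / (1 + α) + (α + ν * x) / (1 + α) -
      2 * (α * (1 - x) / (1 + α) * ((α + ν * x) / (1 + α))) =
      (α * (1 - x) * (1 + α) + (α + ν * x) * (1 + α) -
        2 * (α * (1 - x) * (α + ν * x))) / (1 + α) ^ 2 := by
    field_simp
  have h3 : (1 : ℝ) - (1 - ν) / (1 + α) ^ 2 = ((1 + α) ^ 2 - (1 - ν)) / (1 + α) ^ 2 := by
    field_simp
  rw [h2, h3, div_le_div_iff_of_pos_right (by positivity)]
  have h1 : 0 ≤ 1 + ν - 2 * ν * x := by nlinarith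
  nlinarith [mul_nonneg (mul_nonneg hα.le hx0) h1,
    mul_nonneg hν0 (sub_nonneg.mpr hx1), mul_nonneg (sq_nonneg α) (sub_nonneg.mpr hx1)]
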